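/- Let ε > 0, m, m' ≥ 1 be integers and let A ⊆ ℚ_p^× be a set such that t·(1+p^mℤ_p) ⊆ A for every t ∈ A and ac_m is constant on A. Let f : A → ℚ_p^× be a function such that ac_{m'}(f(t)) is constant on A and such that for each t ∈ A there is c_t ∈ ℚ_p^× with |c_t|_p ≤ ε satisfying: (i) v(f(x) - f(y)) = v(c_t) + v(x - y) for all x ≠ y in t·(1+p^mℤ_p), and (ii) m + v(c_t) + v(t) = m' + v(f(t)). Then f is globally Lipschitz continuous on A with constant ε·max(1, p^{m'-m}), i.e. |f(x₁) - f(x₂)|_p ≤ ε·max(1, p^{m'-m})·|x₁ - x₂|_p for all x₁, x₂ ∈ A. -/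
import Mathlib


/-- `ac_k(w) = ac_k(t)`: the angular components mod `p^k` agree. -/
def acEq (p : ℕ) [Fact p.Prime] (k : ℕ) (w t : ℚ_[p]) : Prop :=
  ‖w * (p : ℚ_[p]) ^ (-w.valuation) - t * (p : ℚ_[p]) ^ (-t.valuation)‖ ≤ (p : ℝ) ^ (-(k : ℤ))

/-- Let `A ⊆ ℚ_p^×` be a union of the maximal balls `t·(1+p^mℤ_p)` with
constant `ac_m`, and `f : A → ℚ_p^×` with constant `ac_{m'}` such that on each ball
`t·(1+p^mℤ_p)` it satisfies the Jacobian property with Jacobian `c_t`, `‖c_t‖ ≤ ε`, and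
the bookkeeping `m + v(c_t) + v(t) = m' + v(f t)`. Then `f` is globally Lipschitz on `A`
with constant `ε·max(1, p^{m'-m})`. -/
theorem stmt12 (p : ℕ) [Fact p.Prime] (ε : ℝ) (hε : 0 < ε) (m m' : ℕ)
    (hm : 1 ≤ m) (hm' : 1 ≤ m') (A : Set ℚ_[p])
    (hA0 : ∀ x ∈ A, x ≠ 0)
    (hAball : ∀ t ∈ A, ∀ w : ℚ_[p], ‖w - t‖ ≤ (p : ℝ) ^ (-(m : ℤ)) * ‖t‖ → w ∈ A)
    (hAac : ∀ x ∈ A, ∀ y ∈ A, acEq p m x y)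
    (f : ℚ_[p] → ℚ_[p])
    (hf0 : ∀ x ∈ A, f x ≠ 0)
    (hfac : ∀ x ∈ A, ∀ y ∈ A, acEq p m' (f x) (f y))
    (hc : ∀ t ∈ A, ∃ c : ℚ_[p], c ≠ 0 ∧ ‖c‖ ≤ ε ∧
      (∀ x y : ℚ_[p], ‖x - t‖ ≤ (p : ℝ) ^ (-(m : ℤ)) * ‖t‖ →
        ‖y - t‖ ≤ (p : ℝ) ^ (-(m : ℤ)) * ‖t‖ → x ≠ y →
        (f x - f y).valuation = c.valuation + (x - y).valuation) ∧
      (m : ℤ) + c.valuation + t.valuation = (m' : ℤ) + (f t).valuation) :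
    ∀ x₁ ∈ A, ∀ x₂ ∈ A,
      ‖f x₁ - f x₂‖ ≤ ε * max 1 ((p : ℝ) ^ ((m' : ℤ) - (m : ℤ))) * ‖x₁ - x₂‖ := by
  intro x₁ h₁ x₂ h₂
  have hp1 : (1 : ℝ) < p := by exact_mod_cast (Fact.out : p.Prime).one_lt
  have hp0 : (0 : ℝ) < p := lt_trans one_pos hp1
  set K : ℝ := max 1 ((p : ℝ) ^ ((m' : ℤ) - (m : ℤ))) with hK
  have hK1 : (1 : ℝ) ≤ K := le_max_left _ _
  by_cases heq : f x₁ = f x₂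
  · rw [heq, sub_self, norm_zero]
    positivity
  have hne : x₁ ≠ x₂ := by rintro rfl; exact heq rfl
  have hx₁ : x₁ ≠ 0 := hA0 x₁ h₁
  have hx₂ : x₂ ≠ 0 := hA0 x₂ h₂
  by_cases hball : ‖x₂ - x₁‖ ≤ (p : ℝ) ^ (-(m : ℤ)) * ‖x₁‖
  · -- same ball: use the Jacobian property at t = x₁
    obtain ⟨c, hc0, hcε, hjac, _⟩ := hc x₁ h₁
    have hval := hjac x₁ x₂ (by simp; positivity) hball hne
    rw [Padic.norm_eq_zpow_neg_valuation (sub_ne_zero.mpr heq), hval, neg_add,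
      zpow_add₀ (ne_of_gt hp0), ← Padic.norm_eq_zpow_neg_valuation hc0,
      ← Padic.norm_eq_zpow_neg_valuation (sub_ne_zero.mpr hne)]
    have h1 : ‖c‖ ≤ ε * K := le_trans hcε (le_mul_of_one_le_right hε.le hK1)
    exact mul_le_mul_of_nonneg_right h1 (norm_nonneg _)
  · -- different balls
    have hv : x₁.valuation ≠ x₂.valuation := by
      intro hv
      apply hball
      have hac := hAac x₁ h₁ x₂ h₂
      unfold acEq at hac
      have key : x₁ - x₂ =
          (x₁ * (p : ℚ_[p]) ^ (-x₁.valuation) - x₂ * (p : ℚ_[p]) ^ (-x₂.valuation)) *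
            (p : ℚ_[p]) ^ (x₁.valuation) := by
        rw [sub_mul, mul_assoc, mul_assoc, ← zpow_add₀, ← hv, ← zpow_add₀,
          neg_add_cancel, zpow_zero, mul_one, mul_one] <;>
          exact_mod_cast (Fact.out : p.Prime).ne_zero
      calc ‖x₂ - x₁‖ = ‖x₁ - x₂‖ := norm_sub_rev _ _
        _ = ‖x₁ * (p : ℚ_[p]) ^ (-x₁.valuation) - x₂ * (p : ℚ_[p]) ^ (-x₂.valuation)‖ *
            (p : ℝ) ^ (-x₁.valuation) := by
            rw [key, norm_mul, Padic.norm_p_zpow]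
        _ ≤ (p : ℝ) ^ (-(m : ℤ)) * (p : ℝ) ^ (-x₁.valuation) := by
            apply mul_le_mul_of_nonneg_right hac (by positivity)
        _ = (p : ℝ) ^ (-(m : ℤ)) * ‖x₁‖ := by rw [Padic.norm_eq_zpow_neg_valuation hx₁]
    have hnorm_ne : ‖x₁‖ ≠ ‖x₂‖ := by
      rw [Padic.norm_eq_zpow_neg_valuation hx₁, Padic.norm_eq_zpow_neg_valuation hx₂]
      intro h
      exact hv (neg_injective (zpow_right_injective₀ hp0 (ne_of_gt hp1) h))
    have hsub : ‖x₁ - x₂‖ = max ‖x₁‖ ‖x₂‖ := by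
      rw [sub_eq_add_neg, Padic.add_eq_max_of_ne (by rwa [norm_neg]), norm_neg]
    have fb : ∀ t ∈ A, ‖f t‖ ≤ ε * (p : ℝ) ^ ((m' : ℤ) - (m : ℤ)) * ‖t‖ := by
      intro t ht
      obtain ⟨c, hc0, hcε, _, hbook⟩ := hc t ht
      have hft : (f t).valuation = ((m : ℤ) - (m' : ℤ)) + c.valuation + t.valuation := by omega
      rw [Padic.norm_eq_zpow_neg_valuation (hf0 t ht), hft]
      have : (p : ℝ) ^ (-((((m : ℤ) - (m' : ℤ)) + c.valuation) + t.valuation)) =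
          (p : ℝ) ^ ((m' : ℤ) - (m : ℤ)) * ((p : ℝ) ^ (-c.valuation) * (p : ℝ) ^ (-t.valuation)) := by
        rw [← zpow_add₀ (ne_of_gt hp0), ← zpow_add₀ (ne_of_gt hp0)]; ring_nf
      rw [this, ← Padic.norm_eq_zpow_neg_valuation hc0, ← Padic.norm_eq_zpow_neg_valuation (hA0 t ht)]
      calc (p : ℝ) ^ ((m' : ℤ) - (m : ℤ)) * (‖c‖ * ‖t‖)
          ≤ (p : ℝ) ^ ((m' : ℤ) - (m : ℤ)) * (ε * ‖t‖) := by
            apply mul_le_mul_of_nonneg_left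
              (mul_le_mul_of_nonneg_right hcε (norm_nonneg _)) (by positivity)
        _ = ε * (p : ℝ) ^ ((m' : ℤ) - (m : ℤ)) * ‖t‖ := by ring
    have hfar : ‖f x₁ - f x₂‖ ≤ max ‖f x₁‖ ‖f x₂‖ := by
      rw [sub_eq_add_neg]
      exact le_trans (Padic.nonarchimedean _ _) (by rw [norm_neg])
    have hKd : (p : ℝ) ^ ((m' : ℤ) - (m : ℤ)) ≤ K := le_max_right _ _
    have hεK : 0 ≤ ε * K := by positivity
    calc ‖f x₁ - f x₂‖ ≤ max ‖f x₁‖ ‖f x₂‖ := hfar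
      _ ≤ ε * K * max ‖x₁‖ ‖x₂‖ := by
          have step : ∀ t ∈ A, ‖t‖ ≤ max ‖x₁‖ ‖x₂‖ →
              ‖f t‖ ≤ ε * K * max ‖x₁‖ ‖x₂‖ := by
            intro t ht hle
            calc ‖f t‖ ≤ ε * (p : ℝ) ^ ((m' : ℤ) - (m : ℤ)) * ‖t‖ := fb t ht
              _ ≤ ε * K * max ‖x₁‖ ‖x₂‖ :=
                mul_le_mul (mul_le_mul_of_nonneg_left hKd hε.le) hle (norm_nonneg _) hεK
          exact max_le (step x₁ h₁ (le_max_left _ _)) (step x₂ h₂ (le_max_right _ _))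
      _ = ε * K * ‖x₁ - x₂‖ := by rw [hsub]
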